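/- Let d ≥ 1, let q be a prime power, let F be a finite field with q elements, and let Z be a nonempty set of 1-dimensional linear subspaces of F^{d+1}. Let Γ(Z) be the set of hyperplanes (d-dimensional linear subspaces) of F^{d+1} containing at least one member of Z. Then |Γ(Z)| ≥ |Z|·N_{d−1}² / ( N_{d−1} + (|Z| − 1)·N_{d−2} ), where N_k = (q^{k+1} − 1)/(q − 1). -/

import Mathlib

open Module Submodule Finset

section counting

variable {F : Type*} [Field F] [Fintype F]

/-- The number of hyperplanes of a finite vector space `W` over `F`, times `|F| - 1`,
equals `|F| ^ dim W - 1`. -/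
lemma hyperplane_count (W : Type*) [AddCommGroup W] [Module F W] [Finite W] :
    {c : Submodule F W | finrank F c + 1 = finrank F W}.ncard * (Fintype.card F - 1)
      = Fintype.card F ^ finrank F W - 1 := by
  classical
  haveI : Fintype W := Fintype.ofFinite W
  haveI : Module.Finite F W := Module.finite_iff_finite.mpr ‹_›
  haveI : Finite (Module.Dual F W) :=
    Finite.of_injective (fun φ => (φ : W → F)) DFunLike.coe_injective
  haveI : Fintype (Module.Dual F W) := Fintype.ofFinite _
  haveI : Finite (Submodule F W) :=
    Finite.of_injective (fun p => (p : Set W)) SetLike.coe_injective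
  haveI : Fintype (Submodule F W) := Fintype.ofFinite _
  set q := Fintype.card F with hqdef
  set m := finrank F W with hmdef
  set S : Finset (Module.Dual F W) := Finset.univ.filter (fun φ => φ ≠ 0) with hS
  set T : Finset (Submodule F W) := Finset.univ.filter (fun c => finrank F c + 1 = m) with hT
  have hset : {c : Submodule F W | finrank F c + 1 = m} = ↑T := by
    ext c; simp [hT]
  rw [hset, Set.ncard_coe_finset]
  have hker : ∀ φ : Module.Dual F W, φ ≠ 0 → finrank F (LinearMap.ker φ) + 1 = m := by
    intro φ hφ
    have h1 : finrank F (LinearMap.range φ) = 1 := by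
      have hle : finrank F (LinearMap.range φ) ≤ finrank F F := (LinearMap.range φ).finrank_le
      rw [finrank_self] at hle
      have hne : LinearMap.range φ ≠ ⊥ := by
        intro h; exact hφ (LinearMap.range_eq_bot.mp h)
      have hpos : finrank F (LinearMap.range φ) ≠ 0 := by
        intro h
        exact hne (Submodule.finrank_eq_zero.mp h)
      omega
    have h2 := LinearMap.finrank_range_add_finrank_ker φ
    rw [h1] at h2
    omega
  have hfiber : ∀ c ∈ T, (S.filter (fun φ => LinearMap.ker φ = c)).card = q - 1 := by
    intro c hc
    rw [hT, Finset.mem_filter] at hc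
    obtain ⟨-, hc⟩ := hc
    have hAnn : finrank F c.dualAnnihilator = 1 := by
      have h1 : finrank F (W ⧸ c) = finrank F c.dualAnnihilator :=
        (Subspace.quotEquivAnnihilator c).finrank_eq
      have h2 := Submodule.finrank_quotient_add_finrank c
      omega
    have hcardA : Fintype.card c.dualAnnihilator = q := by
      rw [card_eq_pow_finrank (K := F) (V := c.dualAnnihilator), hAnn, pow_one]
    have hEq : S.filter (fun φ => LinearMap.ker φ = c)
        = (Finset.univ.filter (fun φ : Module.Dual F W => φ ∈ c.dualAnnihilator)).erase 0 := by
      ext φ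
      simp only [hS, Finset.mem_filter, Finset.filter_filter, Finset.mem_erase,
        Finset.mem_univ, true_and]
      constructor
      · rintro ⟨hφ, hkerφ⟩
        refine ⟨hφ, ?_⟩
        rw [Submodule.mem_dualAnnihilator]
        intro w hw
        rw [← hkerφ] at hw
        exact hw
      · rintro ⟨hφ, hmem⟩
        refine ⟨hφ, ?_⟩
        have hle : c ≤ LinearMap.ker φ := by
          intro w hw
          rw [LinearMap.mem_ker]
          rw [Submodule.mem_dualAnnihilator] at hmem
          exact hmem w hw
        exact (Submodule.eq_of_le_of_finrank_eq hle (by have := hker φ hφ; omega)).symm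
    rw [hEq, Finset.card_erase_of_mem (by simp [Submodule.zero_mem])]
    have : (Finset.univ.filter (fun φ : Module.Dual F W => φ ∈ c.dualAnnihilator)).card
        = Fintype.card c.dualAnnihilator := (Fintype.card_subtype _).symm
    rw [this, hcardA]
  have hmain : S.card = T.card * (q - 1) := by
    rw [Finset.card_eq_sum_card_fiberwise (f := fun φ => LinearMap.ker φ) (t := T)
      (fun φ hφ => by
        rw [Finset.mem_coe, hS, Finset.mem_filter] at hφ
        rw [Finset.mem_coe, hT, Finset.mem_filter]
        exact ⟨Finset.mem_univ _, hker φ hφ.2⟩)]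
    rw [Finset.sum_congr rfl hfiber, Finset.sum_const, smul_eq_mul]
  have hScard : S.card = q ^ m - 1 := by
    have hDual : Fintype.card (Module.Dual F W) = q ^ m := by
      rw [card_eq_pow_finrank (K := F), Subspace.dual_finrank_eq]
    have hS' : S = Finset.univ.erase 0 := by
      ext φ; simp [hS, Finset.mem_erase]
    rw [hS', Finset.card_erase_of_mem (Finset.mem_univ _), Finset.card_univ, hDual]
  omega

/-- The number of hyperplanes of a finite vector space `V` containing a fixed subspace `U`,
times `|F| - 1`, equals `|F| ^ (dim V - dim U) - 1`. -/
lemma hyperplanes_containing_count (V : Type*) [AddCommGroup V] [Module F V] [Finite V]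
    (U : Submodule F V) :
    {c : Submodule F V | finrank F c + 1 = finrank F V ∧ U ≤ c}.ncard * (Fintype.card F - 1)
      = Fintype.card F ^ (finrank F V - finrank F U) - 1 := by
  classical
  haveI : Module.Finite F V := Module.finite_iff_finite.mpr ‹_›
  haveI : Finite (V ⧸ U) := Quotient.finite _
  have hUV : finrank F U ≤ finrank F V := U.finrank_le
  have hquot : finrank F (V ⧸ U) = finrank F V - finrank F U := by
    have := U.finrank_quotient_add_finrank
    omega
  have hrk : ∀ c : Submodule F V, U ≤ c →
      finrank F (c.map U.mkQ) + finrank F U = finrank F c := by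
    intro c hc
    have h1 := LinearMap.finrank_range_add_finrank_ker (U.mkQ.comp c.subtype)
    have h2 : LinearMap.range (U.mkQ.comp c.subtype) = c.map U.mkQ := by
      rw [LinearMap.range_comp, Submodule.range_subtype]
    have h3 : finrank F (LinearMap.ker (U.mkQ.comp c.subtype)) = finrank F U := by
      have hk : LinearMap.ker (U.mkQ.comp c.subtype) = U.comap c.subtype := by
        rw [LinearMap.ker_comp, Submodule.ker_mkQ]
      rw [hk]
      exact (Submodule.comapSubtypeEquivOfLe hc).finrank_eq
    rw [h2, h3] at h1
    exact h1
  have himg : {c : Submodule F V | finrank F c + 1 = finrank F V ∧ U ≤ c}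
      = (Submodule.comap U.mkQ) ''
        {c' : Submodule F (V ⧸ U) | finrank F c' + 1 = finrank F (V ⧸ U)} := by
    ext c
    simp only [Set.mem_image, Set.mem_setOf_eq]
    constructor
    · rintro ⟨hrank, hle⟩
      refine ⟨c.map U.mkQ, ?_, ?_⟩
      · have := hrk c hle
        omega
      · rw [Submodule.comap_map_mkQ, sup_eq_right.mpr hle]
    · rintro ⟨c', hc', rfl⟩
      have hle : U ≤ Submodule.comap U.mkQ c' := by
        intro x hx
        have hx0 : U.mkQ x = 0 := (Submodule.Quotient.mk_eq_zero _).mpr hx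
        rw [Submodule.mem_comap, hx0]
        exact c'.zero_mem
      have hmap : (Submodule.comap U.mkQ c').map U.mkQ = c' :=
        Submodule.map_comap_eq_of_surjective (Submodule.mkQ_surjective U) _
      have h4 := hrk _ hle
      rw [hmap] at h4
      exact ⟨by omega, hle⟩
  rw [himg, Set.ncard_image_of_injective _
    (Submodule.comap_injective_of_surjective (Submodule.mkQ_surjective U)), ← hquot]
  exact hyperplane_count (V ⧸ U)

end counting

/-- **Expansion of the atom–coatom graph of `L(d+1, q)` (Corrádi-type bound).**
Let `F` be a field with `q` elements (`q` a prime power), `d ≥ 1`, and let `Z` be a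
nonempty set of `1`-dimensional subspaces of `F^{d+1}`. Let `Γ(Z)` be the set of
hyperplanes (`d`-dimensional subspaces) containing at least one member of `Z`. Then
`|Γ(Z)| ≥ |Z|·N_{d−1}² / (N_{d−1} + (|Z| − 1)·N_{d−2})`, where
`N_k = (q^{k+1} − 1)/(q − 1)`. -/
theorem neighborhood_lower_bound (d : ℕ) (hd : 1 ≤ d) (q : ℕ) (hq : IsPrimePow q)
    (F : Type*) [Field F] [Fintype F] (hcard : Fintype.card F = q)
    (Z : Set (Submodule F (Fin (d + 1) → F)))
    (hZ : Z.Nonempty) (hZ1 : ∀ a ∈ Z, Module.finrank F a = 1) :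
    ((Z.ncard : ℝ) * (((q ^ d - 1) / (q - 1) : ℕ) : ℝ) ^ 2) /
        ((((q ^ d - 1) / (q - 1) : ℕ) : ℝ) +
          ((Z.ncard : ℝ) - 1) * (((q ^ (d - 1) - 1) / (q - 1) : ℕ) : ℝ)) ≤
      ({c : Submodule F (Fin (d + 1) → F) |
          Module.finrank F c = d ∧ ∃ a ∈ Z, a ≤ c}.ncard : ℝ) := by
  classical
  have hq2 : 2 ≤ q := hq.two_le
  have hq1 : 0 < q - 1 := by omega
  have hdim : finrank F (Fin (d + 1) → F) = d + 1 := Module.finrank_fin_fun F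
  set r : ℕ := (q ^ d - 1) / (q - 1) with hr
  set lam : ℕ := (q ^ (d - 1) - 1) / (q - 1) with hlam
  set n : ℕ := Z.ncard with hn
  -- counting lemma specialized
  have hcount : ∀ U : Submodule F (Fin (d + 1) → F),
      {c : Submodule F (Fin (d + 1) → F) | finrank F c = d ∧ U ≤ c}.ncard
        = (q ^ (d + 1 - finrank F U) - 1) / (q - 1) := by
    intro U
    have h := hyperplanes_containing_count (F := F) (Fin (d + 1) → F) U
    rw [hcard, hdim] at h
    have hsets : {c : Submodule F (Fin (d + 1) → F) | finrank F c = d ∧ U ≤ c}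
        = {c : Submodule F (Fin (d + 1) → F) | finrank F c + 1 = d + 1 ∧ U ≤ c} := by
      ext c
      constructor
      · rintro ⟨h1, h2⟩; exact ⟨by omega, h2⟩
      · rintro ⟨h1, h2⟩; exact ⟨by omega, h2⟩
    rw [hsets]
    exact (Nat.div_eq_of_eq_mul_left hq1 h.symm).symm
  have hCa : ∀ a ∈ Z, {c : Submodule F (Fin (d + 1) → F) | finrank F c = d ∧ a ≤ c}.ncard
      = r := by
    intro a ha
    rw [hcount a, hZ1 a ha, Nat.add_sub_cancel]
  have hCab : ∀ a ∈ Z, ∀ b ∈ Z, a ≠ b →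
      {c : Submodule F (Fin (d + 1) → F) | finrank F c = d ∧ a ≤ c ∧ b ≤ c}.ncard = lam := by
    intro a ha b hb hab
    have hinf : finrank F ↥(a ⊓ b) = 0 := by
      by_contra h
      have hle : finrank F ↥(a ⊓ b) ≤ finrank F a := Submodule.finrank_mono inf_le_left
      rw [hZ1 a ha] at hle
      have h1 : finrank F ↥(a ⊓ b) = 1 := by omega
      have h2 : a ⊓ b = a :=
        Submodule.eq_of_le_of_finrank_eq inf_le_left (by rw [h1, hZ1 a ha])
      have hab' : a ≤ b := by rw [← h2]; exact inf_le_right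
      exact hab (Submodule.eq_of_le_of_finrank_eq hab' (by rw [hZ1 a ha, hZ1 b hb]))
    have hsup : finrank F ↥(a ⊔ b) = 2 := by
      have h3 := Submodule.finrank_sup_add_finrank_inf_eq a b
      rw [hZ1 a ha, hZ1 b hb, hinf] at h3
      omega
    have hsets : {c : Submodule F (Fin (d + 1) → F) | finrank F c = d ∧ a ≤ c ∧ b ≤ c}
        = {c : Submodule F (Fin (d + 1) → F) | finrank F c = d ∧ a ⊔ b ≤ c} := by
      ext c
      simp [sup_le_iff]
    have hexp : d + 1 - 2 = d - 1 := by omega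
    rw [hsets, hcount, hsup, hexp]
  -- pass to finsets
  haveI : Finite (Submodule F (Fin (d + 1) → F)) :=
    Finite.of_injective (fun p => (p : Set (Fin (d + 1) → F))) SetLike.coe_injective
  have hZfin : Z.Finite := Set.toFinite Z
  have hΓfin : {c : Submodule F (Fin (d + 1) → F) |
      Module.finrank F c = d ∧ ∃ a ∈ Z, a ≤ c}.Finite := Set.toFinite _
  set Zf := hZfin.toFinset with hZf
  set Γf := hΓfin.toFinset with hΓf
  have hncard : Zf.card = n := by
    rw [hZf, hn, Set.ncard_eq_toFinset_card Z hZfin]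
  have hΓcard : Γf.card = {c : Submodule F (Fin (d + 1) → F) |
      Module.finrank F c = d ∧ ∃ a ∈ Z, a ≤ c}.ncard := by
    rw [hΓf, Set.ncard_eq_toFinset_card _ hΓfin]
  have hn1 : 1 ≤ n := by
    rw [hn]
    have := (Set.ncard_pos hZfin).mpr hZ
    omega
  -- local degree counts
  have hC1 : ∀ a ∈ Zf, (Γf.filter (fun c => a ≤ c)).card = r := by
    intro a haf
    have ha : a ∈ Z := hZfin.mem_toFinset.mp haf
    have hcoe : (↑(Γf.filter (fun c => a ≤ c)) : Set (Submodule F (Fin (d + 1) → F)))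
        = {c : Submodule F (Fin (d + 1) → F) | finrank F c = d ∧ a ≤ c} := by
      ext c
      simp only [Finset.coe_filter, Set.mem_setOf_eq, hΓf, Set.Finite.mem_toFinset]
      constructor
      · rintro ⟨⟨h1, -⟩, h2⟩; exact ⟨h1, h2⟩
      · rintro ⟨h1, h2⟩; exact ⟨⟨h1, a, ha, h2⟩, h2⟩
    rw [← hCa a ha, ← hcoe, Set.ncard_coe_finset]
  have hC2 : ∀ a ∈ Zf, ∀ b ∈ Zf, a ≠ b →
      (Γf.filter (fun c => a ≤ c ∧ b ≤ c)).card = lam := by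
    intro a haf b hbf hab
    have ha : a ∈ Z := hZfin.mem_toFinset.mp haf
    have hb : b ∈ Z := hZfin.mem_toFinset.mp hbf
    have hcoe : (↑(Γf.filter (fun c => a ≤ c ∧ b ≤ c)) : Set (Submodule F (Fin (d + 1) → F)))
        = {c : Submodule F (Fin (d + 1) → F) | finrank F c = d ∧ a ≤ c ∧ b ≤ c} := by
      ext c
      simp only [Finset.coe_filter, Set.mem_setOf_eq, hΓf, Set.Finite.mem_toFinset]
      constructor
      · rintro ⟨⟨h1, -⟩, h2⟩; exact ⟨h1, h2⟩
      · rintro ⟨h1, h2, h3⟩; exact ⟨⟨h1, a, ha, h2⟩, h2, h3⟩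
    rw [← hCab a ha b hb hab, ← hcoe, Set.ncard_coe_finset]
  -- double counting
  have hsum1 : ∑ c ∈ Γf, (Zf.filter (fun a => a ≤ c)).card = n * r := by
    have e1 : ∀ c ∈ Γf, (Zf.filter (fun a => a ≤ c)).card
        = ∑ a ∈ Zf, if a ≤ c then 1 else 0 := fun c _ => Finset.card_filter _ _
    rw [Finset.sum_congr rfl e1, Finset.sum_comm]
    have e2 : ∀ a ∈ Zf, (∑ c ∈ Γf, if a ≤ c then 1 else 0) = r := by
      intro a ha
      rw [← Finset.card_filter]
      exact hC1 a ha
    rw [Finset.sum_congr rfl e2, Finset.sum_const, smul_eq_mul, hncard]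
  have hsum2 : ∑ c ∈ Γf, ((Zf.filter (fun a => a ≤ c)).card) ^ 2
      = n * (r + (n - 1) * lam) := by
    have step1 : ∀ c ∈ Γf, ((Zf.filter (fun a => a ≤ c)).card) ^ 2
        = ∑ a ∈ Zf, ∑ b ∈ Zf, if a ≤ c ∧ b ≤ c then 1 else 0 := by
      intro c _
      rw [Finset.card_filter, sq, Finset.sum_mul_sum]
      refine Finset.sum_congr rfl fun a _ => Finset.sum_congr rfl fun b _ => ?_
      by_cases h1 : a ≤ c <;> by_cases h2 : b ≤ c <;> simp [h1, h2]
    rw [Finset.sum_congr rfl step1, Finset.sum_comm]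
    have step2 : ∀ a ∈ Zf, (∑ c ∈ Γf, ∑ b ∈ Zf, if a ≤ c ∧ b ≤ c then 1 else 0)
        = r + (n - 1) * lam := by
      intro a ha
      rw [Finset.sum_comm]
      have hdiag : (∑ c ∈ Γf, if a ≤ c ∧ a ≤ c then 1 else 0) = r := by
        simp only [and_self]
        rw [← Finset.card_filter]
        exact hC1 a ha
      have hoff : ∀ b ∈ Zf.erase a, (∑ c ∈ Γf, if a ≤ c ∧ b ≤ c then 1 else 0) = lam := by
        intro b hb
        obtain ⟨hne, hbZ⟩ := Finset.mem_erase.mp hb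
        rw [← Finset.card_filter]
        exact hC2 a ha b hbZ (Ne.symm hne)
      rw [← Finset.add_sum_erase _ _ ha, hdiag, Finset.sum_congr rfl hoff,
        Finset.sum_const, smul_eq_mul, Finset.card_erase_of_mem ha, hncard]
    rw [Finset.sum_congr rfl step2, Finset.sum_const, smul_eq_mul, hncard]
  -- Cauchy–Schwarz
  have hCS := Finset.sum_mul_sq_le_sq_mul_sq Γf
    (fun c => ((Zf.filter (fun a => a ≤ c)).card : ℕ)) (fun _ => 1)
  simp only [mul_one, one_pow, Finset.sum_const, smul_eq_mul, Nat.mul_one] at hCS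
  rw [hsum1, hsum2] at hCS
  -- hCS : (n * r) ^ 2 ≤ (∑ deg^2) * Γf.card  -- with sums rewritten
  -- numeric facts
  have hr1 : 1 ≤ r := by
    rw [hr, Nat.one_le_div_iff hq1]
    have hqd : q ≤ q ^ d := Nat.le_self_pow (by omega) q
    omega
  -- move to the reals
  have hcast : ((n : ℝ) * r) ^ 2
      ≤ ((n : ℝ) * ((r : ℝ) + ((n : ℝ) - 1) * (lam : ℝ))) * (Γf.card : ℝ) := by
    have := hCS
    have hc2 : (((n * r) ^ 2 : ℕ) : ℝ) ≤ (((n * (r + (n - 1) * lam)) * Γf.card : ℕ) : ℝ) := by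
      exact_mod_cast this
    push_cast [Nat.cast_sub hn1] at hc2
    convert hc2 using 2
  have hnpos : (0 : ℝ) < (n : ℝ) := by
    have : (1 : ℝ) ≤ (n : ℝ) := by exact_mod_cast hn1
    linarith
  have hrR : (1 : ℝ) ≤ (r : ℝ) := by exact_mod_cast hr1
  have hlamR : (0 : ℝ) ≤ (lam : ℝ) := Nat.cast_nonneg _
  have hn1R : (0 : ℝ) ≤ (n : ℝ) - 1 := by
    have : (1 : ℝ) ≤ (n : ℝ) := by exact_mod_cast hn1
    linarith
  have hden : (0 : ℝ) < (r : ℝ) + ((n : ℝ) - 1) * (lam : ℝ) := by nlinarith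
  have hkey : (n : ℝ) * (r : ℝ) ^ 2
      ≤ (Γf.card : ℝ) * ((r : ℝ) + ((n : ℝ) - 1) * (lam : ℝ)) := by
    have h2 : (n : ℝ) * ((n : ℝ) * (r : ℝ) ^ 2)
        ≤ (n : ℝ) * ((Γf.card : ℝ) * ((r : ℝ) + ((n : ℝ) - 1) * (lam : ℝ))) := by
      nlinarith [hcast]
    exact le_of_mul_le_mul_left h2 hnpos
  rw [div_le_iff₀ hden, ← hΓcard]
  exact hkey
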